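/- For V(x,y) = (x(2c + (a−2c)x + 2(b−c)y), y(2c + 2(b−c)x + (a−2c)y)) on Δ with a ∈ [0,1), b ∈ [0,1/2], c > 1/2, and a ≠ 2b, V has exactly four fixed points in Δ: λ₀ = (0,0), λ₁ = (0, (2c−1)/(2c−a)), λ₂ = ((2c−1)/(2c−a), 0), and λ₃ = ((2c−1)/(4c−a−2b), (2c−1)/(4c−a−2b)). -/

import Mathlib

/-- for c > 1/2 and a ≠ 2b, the reduced symmetric 2-Volterra QSO has
exactly four fixed points in Δ: λ₀, λ₁, λ₂, λ₃. -/
theorem four_fixed_points_symmetric_2volterra (a b c : ℝ)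
    (ha0 : 0 ≤ a) (ha1 : a < 1) (hb0 : 0 ≤ b) (hb1 : b ≤ 1 / 2)
    (hc : 1 / 2 < c) (hc1 : c ≤ 1) (hab : a ≠ 2 * b) :
    let V : ℝ × ℝ → ℝ × ℝ := fun p =>
      (p.1 * (2 * c + (a - 2 * c) * p.1 + 2 * (b - c) * p.2),
       p.2 * (2 * c + 2 * (b - c) * p.1 + (a - 2 * c) * p.2))
    let Δ : Set (ℝ × ℝ) := {p | 0 ≤ p.1 ∧ 0 ≤ p.2 ∧ p.1 + p.2 ≤ 1}
    {p ∈ Δ | V p = p} =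
      {((0 : ℝ), (0 : ℝ)), (0, (2 * c - 1) / (2 * c - a)),
       ((2 * c - 1) / (2 * c - a), 0),
       ((2 * c - 1) / (4 * c - a - 2 * b), (2 * c - 1) / (4 * c - a - 2 * b))} := by
  intro V Δ
  have h2ca : 0 < 2 * c - a := by linarith
  have hden : 0 < 4 * c - a - 2 * b := by linarith
  have hab' : a - 2 * b ≠ 0 := sub_ne_zero.mpr hab
  ext ⟨x, y⟩
  simp only [V, Δ, Set.mem_sep_iff, Set.mem_setOf_eq, Set.mem_insert_iff,
    Set.mem_singleton_iff, Prod.mk.injEq]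
  constructor
  · rintro ⟨⟨hx0, hy0, hxy⟩, heq⟩
    obtain ⟨hx, hy⟩ := heq
    rcases eq_or_ne x 0 with hxz | hxne
    · rcases eq_or_ne y 0 with hyz | hyne
      · exact Or.inl ⟨hxz, hyz⟩
      · refine Or.inr (Or.inl ⟨hxz, ?_⟩)
        have key : y * (2 * c + (a - 2 * c) * y - 1) = 0 := by
          linear_combination hy + 2 * (c - b) * y * hxz
        rcases mul_eq_zero.mp key with h | h
        · exact absurd h hyne
        · rw [eq_div_iff h2ca.ne']
          linear_combination -h
    · rcases eq_or_ne y 0 with hyz | hyne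
      · refine Or.inr (Or.inr (Or.inl ⟨?_, hyz⟩))
        have key : x * (2 * c + (a - 2 * c) * x - 1) = 0 := by
          linear_combination hx + 2 * (c - b) * x * hyz
        rcases mul_eq_zero.mp key with h | h
        · exact absurd h hxne
        · rw [eq_div_iff h2ca.ne']
          linear_combination -h
      · refine Or.inr (Or.inr (Or.inr ?_))
        have e1 : 2 * c + (a - 2 * c) * x + 2 * (b - c) * y = 1 := by
          have key : x * (2 * c + (a - 2 * c) * x + 2 * (b - c) * y - 1) = 0 := by
            linear_combination hx
          rcases mul_eq_zero.mp key with h | h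
          · exact absurd h hxne
          · linarith
        have e2 : 2 * c + 2 * (b - c) * x + (a - 2 * c) * y = 1 := by
          have key : y * (2 * c + 2 * (b - c) * x + (a - 2 * c) * y - 1) = 0 := by
            linear_combination hy
          rcases mul_eq_zero.mp key with h | h
          · exact absurd h hyne
          · linarith
        have hxy' : x = y := by
          have h : (a - 2 * b) * (x - y) = 0 := by linear_combination e1 - e2
          have := (mul_eq_zero.mp h).resolve_left hab'
          linarith
        have hxval : x = (2 * c - 1) / (4 * c - a - 2 * b) := by
          rw [eq_div_iff hden.ne']
          linear_combination -e1 + 2 * (c - b) * hxy'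
        exact ⟨hxval, hxy' ▸ hxval⟩
  · have hnum : 0 ≤ 2 * c - 1 := by linarith
    rintro (⟨hx, hy⟩ | ⟨hx, hy⟩ | ⟨hx, hy⟩ | ⟨hx, hy⟩) <;> subst hx <;> subst hy
    · exact ⟨⟨le_refl 0, le_refl 0, by norm_num⟩, by norm_num⟩
    · refine ⟨⟨le_refl 0, div_nonneg hnum h2ca.le, ?_⟩, ?_⟩
      · rw [zero_add, div_le_one h2ca]; linarith
      · refine ⟨by ring, ?_⟩
        field_simp
        ring
    · refine ⟨⟨div_nonneg hnum h2ca.le, le_refl 0, ?_⟩, ?_⟩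
      · rw [add_zero, div_le_one h2ca]; linarith
      · refine ⟨?_, by ring⟩
        field_simp
        ring
    · refine ⟨⟨div_nonneg hnum hden.le, div_nonneg hnum hden.le, ?_⟩, ?_⟩
      · rw [← add_div, div_le_one hden]; linarith
      · refine ⟨?_, ?_⟩ <;> · field_simp [(by linarith : (0:ℝ) < c * 4 - a - 2 * b).ne']; ring
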